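/- For every ε > 0, the number of 2×2 integer matrices with all entries of absolute value at most k having a repeated eigenvalue is O_ε(k^{2+ε}). -/

import Mathlib

open Finset

private lemma sq_of_coprime_nat {x y n : ℕ} (hco : Nat.Coprime x y) (h : x * y = n ^ 2) :
    ∃ u, x = u ^ 2 :=
  exists_eq_pow_of_mul_eq_pow (by rw [Nat.isUnit_iff]; exact hco) h

private lemma param_sq {k x y n : ℕ} (hx1 : 1 ≤ x) (hy1 : 1 ≤ y) (hn : n ≤ k)
    (h : n ^ 2 = x * y) :
    x = Nat.gcd x y * Nat.sqrt (x / Nat.gcd x y) ^ 2 ∧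
    y = Nat.gcd x y * Nat.sqrt (y / Nat.gcd x y) ^ 2 ∧
    Nat.gcd x y * Nat.sqrt (x / Nat.gcd x y) * Nat.sqrt (y / Nat.gcd x y) ≤ k := by
  have hxpos : 0 < x := hx1
  have hypos : 0 < y := hy1
  set g := Nat.gcd x y with hg
  have hgpos : 0 < g := Nat.gcd_pos_of_pos_left y hxpos
  obtain ⟨x', hx'⟩ : g ∣ x := Nat.gcd_dvd_left x y
  obtain ⟨y', hy'⟩ : g ∣ y := Nat.gcd_dvd_right x y
  have hxg : x / g = x' := by rw [hx', Nat.mul_div_cancel_left _ hgpos]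
  have hyg : y / g = y' := by rw [hy', Nat.mul_div_cancel_left _ hgpos]
  have hco : Nat.Coprime x' y' := by
    have := Nat.coprime_div_gcd_div_gcd (m := x) (n := y) hgpos
    rwa [← hg, hxg, hyg] at this
  have hgn : g ∣ n := by
    rw [← Nat.pow_dvd_pow_iff (two_ne_zero)]
    exact ⟨x' * y', by rw [h, hx', hy']; ring⟩
  obtain ⟨m, hm⟩ := hgn
  have hmxy : x' * y' = m ^ 2 := by
    have : g ^ 2 * (x' * y') = g ^ 2 * m ^ 2 := by
      rw [← mul_pow, ← hm, h, hx', hy']; ring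
    exact Nat.eq_of_mul_eq_mul_left (by positivity) this
  obtain ⟨u, hu⟩ := sq_of_coprime_nat hco hmxy
  obtain ⟨v, hv⟩ := sq_of_coprime_nat hco.symm (by rw [mul_comm]; exact hmxy)
  have hsx : Nat.sqrt (x / g) = u := by rw [hxg, hu, Nat.sqrt_eq']
  have hsy : Nat.sqrt (y / g) = v := by rw [hyg, hv, Nat.sqrt_eq']
  have huv : g * u * v = n := by
    have hsq : (g * u * v) ^ 2 = n ^ 2 := by rw [h, hx', hy', hu, hv]; ring
    exact Nat.pow_left_injective (by norm_num) hsq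
  refine ⟨by rw [hsx, ← hu, ← hx'], by rw [hsy, ← hv, ← hy'], ?_⟩
  rw [hsx, hsy, huv]; exact hn

set_option maxHeartbeats 2000000 in
theorem stmt_7 (ε : ℝ) (hε : 0 < ε) :
    ∃ C : ℝ, 0 < C ∧ ∀ k : ℕ, 1 ≤ k →
      ((Finset.filter
          (fun p : ℤ × ℤ × ℤ × ℤ => (p.1 - p.2.2.2) ^ 2 + 4 * p.2.1 * p.2.2.1 = 0)
          (Icc (-(k : ℤ)) k ×ˢ Icc (-(k : ℤ)) k ×ˢ Icc (-(k : ℤ)) k ×ˢ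
            Icc (-(k : ℤ)) k)).card : ℝ)
        ≤ C * (k : ℝ) ^ ((2 : ℝ) + ε) := by
  refine ⟨36 + 12 * (1 + 2 / ε) ^ 2, by positivity, ?_⟩
  intro k hk
  have hk0 : (0:ℝ) < k := by exact_mod_cast hk
  classical
  set I : Finset ℤ := Icc (-(k:ℤ)) (k:ℤ) with hI
  set B : Finset (ℤ × ℤ) :=
    (I ×ˢ I).filter (fun p => ∃ m ∈ Icc (0:ℤ) (k:ℤ), m ^ 2 = -(p.1 * p.2)) with hB
  set Pf : Finset (ℕ × ℕ) :=
    (Icc 1 k ×ˢ Icc 1 k).filter (fun q => ∃ n ∈ Icc 1 k, n ^ 2 = q.1 * q.2) with hPf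
  set D : Finset (ℕ × ℕ × ℕ) :=
    (Icc 1 k ×ˢ Icc 1 k ×ˢ Icc 1 k).filter (fun t => t.1 * t.2.1 * t.2.2 ≤ k) with hD
  -- Step 1 : inject the solution set into (I ×ˢ B) × Bool
  have step1 : (Finset.filter
          (fun p : ℤ × ℤ × ℤ × ℤ => (p.1 - p.2.2.2) ^ 2 + 4 * p.2.1 * p.2.2.1 = 0)
          (I ×ˢ I ×ˢ I ×ˢ I)).card ≤ ((I ×ˢ B) ×ˢ (Finset.univ : Finset Bool)).card := by
    apply Finset.card_le_card_of_injOn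
      (fun p => ((p.1, (p.2.1, p.2.2.1)), decide (p.2.2.2 ≤ p.1)))
    · rintro ⟨a, b, c, d⟩ hp
      simp only [mem_coe, mem_filter, mem_product, hI, mem_Icc] at hp
      obtain ⟨⟨⟨ha1, ha2⟩, ⟨hb1, hb2⟩, ⟨hc1, hc2⟩, ⟨hd1, hd2⟩⟩, heq⟩ := hp
      have h2 : (2:ℤ) ∣ (a - d) := by
        apply Int.prime_two.dvd_of_dvd_pow (n := 2)
        exact ⟨2 * (-(b * c)), by linarith⟩
      obtain ⟨m, hm⟩ := h2
      have hmsq : m ^ 2 = -(b * c) := by nlinarith [heq, hm]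
      have hbc : -(b * c) ≤ (k:ℤ) ^ 2 := by nlinarith [mul_nonneg (by linarith : (0:ℤ) ≤ (k:ℤ) + b) (by linarith : (0:ℤ) ≤ (k:ℤ) + c), mul_nonneg (by linarith : (0:ℤ) ≤ (k:ℤ) - b) (by linarith : (0:ℤ) ≤ (k:ℤ) - c)]
      have habs : |m| ≤ (k:ℤ) := by
        nlinarith [abs_nonneg m, sq_abs m, (by positivity : (0:ℤ) ≤ (k:ℤ))]
      simp only [mem_coe, mem_product, mem_filter, hB, hI, mem_Icc, Finset.mem_univ, and_true]
      exact ⟨⟨ha1, ha2⟩, ⟨⟨hb1, hb2⟩, ⟨hc1, hc2⟩⟩, |m|, ⟨abs_nonneg m, habs⟩,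
        by rw [sq_abs]; exact hmsq⟩
    · rintro ⟨a, b, c, d⟩ hp ⟨a', b', c', d'⟩ hq hfeq
      simp only [mem_coe, mem_filter] at hp hq
      simp only [Prod.ext_iff] at hfeq ⊢
      obtain ⟨⟨haa, hbb, hcc⟩, hdec⟩ := hfeq
      subst haa; subst hbb; subst hcc
      refine ⟨rfl, rfl, rfl, ?_⟩
      have h1 := hp.2
      have h2 := hq.2
      have hdd : (d - d') * (2 * a - d - d') = 0 := by linear_combination h2 - h1
      have hiff : (d ≤ a ↔ d' ≤ a) := by
        simpa [decide_eq_decide] using hdec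
      rcases mul_eq_zero.mp hdd with h | h <;> omega
  -- Step 2 : B splits
  have hIcard' : I.card = 2 * k + 1 := by rw [hI, Int.card_Icc]; omega
  have step3 : (B.card : ℝ) ≤ 6 * k + 2 * Pf.card := by
    have hsub : B ⊆ (B.filter (fun p => p.1 = 0 ∨ p.2 = 0)) ∪
        ((B.filter (fun p => 0 < p.1 ∧ p.2 < 0)) ∪
         (B.filter (fun p => p.1 < 0 ∧ 0 < p.2))) := by
      intro p hp
      have hp' := hp
      simp only [hB, mem_filter] at hp'
      obtain ⟨-, m, hm, hmsq⟩ := hp'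
      simp only [mem_union, mem_filter]
      rcases lt_trichotomy p.1 0 with h | h | h <;>
        rcases lt_trichotomy p.2 0 with h' | h' | h'
      · exact absurd hmsq (by nlinarith [mul_pos_of_neg_of_neg h h', sq_nonneg m])
      · exact Or.inl ⟨hp, Or.inr h'⟩
      · exact Or.inr (Or.inr ⟨hp, h, h'⟩)
      · exact Or.inl ⟨hp, Or.inl h⟩
      · exact Or.inl ⟨hp, Or.inl h⟩
      · exact Or.inl ⟨hp, Or.inl h⟩
      · exact Or.inr (Or.inl ⟨hp, h, h'⟩)
      · exact Or.inl ⟨hp, Or.inr h'⟩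
      · exact absurd hmsq (by nlinarith [mul_pos h h', sq_nonneg m])
    have hB0 : (B.filter (fun p => p.1 = 0 ∨ p.2 = 0)).card ≤ 4 * k + 2 := by
      have hsub0 : (B.filter (fun p => p.1 = 0 ∨ p.2 = 0)) ⊆
          (({(0:ℤ)} ×ˢ I) ∪ (I ×ˢ {(0:ℤ)})) := by
        intro p hp
        simp only [mem_filter, hB, mem_product] at hp
        simp only [mem_union, mem_product, mem_singleton]
        rcases hp.2 with h | h
        · exact Or.inl ⟨h, hp.1.1.2⟩
        · exact Or.inr ⟨hp.1.1.1, h⟩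
      calc (B.filter (fun p => p.1 = 0 ∨ p.2 = 0)).card
          ≤ (({(0:ℤ)} ×ˢ I) ∪ (I ×ˢ {(0:ℤ)})).card := Finset.card_le_card hsub0
        _ ≤ ({(0:ℤ)} ×ˢ I).card + (I ×ˢ {(0:ℤ)}).card := Finset.card_union_le _ _
        _ ≤ 4 * k + 2 := by
            rw [Finset.card_product, Finset.card_product, Finset.card_singleton, hIcard']
            omega
    have hBp : (B.filter (fun p => 0 < p.1 ∧ p.2 < 0)).card ≤ Pf.card := by
      apply Finset.card_le_card_of_injOn (fun p => (p.1.toNat, (-p.2).toNat))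
      · intro p hp
        simp only [mem_coe, mem_filter, hB, mem_product, hI, mem_Icc] at hp
        obtain ⟨⟨⟨⟨hb1, hb2⟩, hc1, hc2⟩, m, hm, hmsq⟩, hbpos, hcneg⟩ := hp
        have hm1 : m ≠ 0 := by
          rintro rfl
          simp only [ne_eq, OfNat.ofNat_ne_zero, not_false_eq_true, zero_pow] at hmsq
          nlinarith [mul_pos hbpos (neg_pos.mpr hcneg)]
        simp only [mem_coe, hPf, mem_filter, mem_product, mem_Icc]
        refine ⟨⟨⟨by omega, by omega⟩, by omega, by omega⟩, m.toNat, ⟨by omega, by omega⟩, ?_⟩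
        have : ((m.toNat : ℤ)) ^ 2 = (p.1.toNat : ℤ) * (((-p.2).toNat : ℤ)) := by
          rw [Int.toNat_of_nonneg hm.1, Int.toNat_of_nonneg (by linarith),
            Int.toNat_of_nonneg (by linarith)]
          linarith [hmsq]
        exact_mod_cast this
      · intro p hp q hq h
        simp only [mem_coe, mem_filter] at hp hq
        simp only [Prod.ext_iff] at h ⊢
        refine ⟨by omega, by omega⟩
    have hBm : (B.filter (fun p => p.1 < 0 ∧ 0 < p.2)).card ≤ Pf.card := by
      apply Finset.card_le_card_of_injOn (fun p => ((-p.1).toNat, p.2.toNat))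
      · intro p hp
        simp only [mem_coe, mem_filter, hB, mem_product, hI, mem_Icc] at hp
        obtain ⟨⟨⟨⟨hb1, hb2⟩, hc1, hc2⟩, m, hm, hmsq⟩, hbneg, hcpos⟩ := hp
        have hm1 : m ≠ 0 := by
          rintro rfl
          simp only [ne_eq, OfNat.ofNat_ne_zero, not_false_eq_true, zero_pow] at hmsq
          nlinarith [mul_pos (neg_pos.mpr hbneg) hcpos]
        simp only [mem_coe, hPf, mem_filter, mem_product, mem_Icc]
        refine ⟨⟨⟨by omega, by omega⟩, by omega, by omega⟩, m.toNat, ⟨by omega, by omega⟩, ?_⟩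
        have : ((m.toNat : ℤ)) ^ 2 = ((-p.1).toNat : ℤ) * ((p.2.toNat : ℤ)) := by
          rw [Int.toNat_of_nonneg hm.1, Int.toNat_of_nonneg (by linarith),
            Int.toNat_of_nonneg (by linarith)]
          linarith [hmsq]
        exact_mod_cast this
      · intro p hp q hq h
        simp only [mem_coe, mem_filter] at hp hq
        simp only [Prod.ext_iff] at h ⊢
        refine ⟨by omega, by omega⟩
    have : B.card ≤ (4 * k + 2) + (Pf.card + Pf.card) := by
      calc B.card ≤ _ := Finset.card_le_card hsub
        _ ≤ (B.filter (fun p => p.1 = 0 ∨ p.2 = 0)).card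
            + ((B.filter (fun p => 0 < p.1 ∧ p.2 < 0)) ∪
               (B.filter (fun p => p.1 < 0 ∧ 0 < p.2))).card := Finset.card_union_le _ _
        _ ≤ (B.filter (fun p => p.1 = 0 ∨ p.2 = 0)).card
            + ((B.filter (fun p => 0 < p.1 ∧ p.2 < 0)).card
               + (B.filter (fun p => p.1 < 0 ∧ 0 < p.2)).card) := by
              gcongr
              exact Finset.card_union_le _ _
        _ ≤ (4 * k + 2) + (Pf.card + Pf.card) := by gcongr
    have hkk : (1:ℝ) ≤ (k:ℝ) := by exact_mod_cast hk
    have := (Nat.cast_le (α := ℝ)).mpr this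
    push_cast at this
    linarith
  -- Step 4 : Pf injects into D
  have step4 : Pf.card ≤ D.card := by
    apply Finset.card_le_card_of_injOn (fun q =>
      (Nat.gcd q.1 q.2, Nat.sqrt (q.1 / Nat.gcd q.1 q.2), Nat.sqrt (q.2 / Nat.gcd q.1 q.2)))
    · intro q hq
      simp only [mem_coe, hPf, mem_filter, mem_product, mem_Icc] at hq
      obtain ⟨⟨⟨hx1, hx2⟩, hy1, hy2⟩, n, hn, hnsq⟩ := hq
      obtain ⟨e1, e2, e3⟩ := param_sq hx1 hy1 hn.2 hnsq
      set g := Nat.gcd q.1 q.2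
      set u := Nat.sqrt (q.1 / g)
      set v := Nat.sqrt (q.2 / g)
      have hg1 : 1 ≤ g := Nat.gcd_pos_of_pos_left _ hx1
      have hgk : g ≤ k := le_trans (Nat.le_of_dvd hx1 (Nat.gcd_dvd_left _ _)) hx2
      have hu1 : 1 ≤ u := by
        rcases Nat.eq_zero_or_pos u with h | h
        · rw [h] at e1; simp at e1; omega
        · exact h
      have hv1 : 1 ≤ v := by
        rcases Nat.eq_zero_or_pos v with h | h
        · rw [h] at e2; simp at e2; omega
        · exact h
      have huuv : u ≤ g * u * v :=
        calc u = 1 * u * 1 := by ring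
          _ ≤ g * u * v := Nat.mul_le_mul (Nat.mul_le_mul hg1 le_rfl) hv1
      have hvuv : v ≤ g * u * v :=
        calc v = 1 * 1 * v := by ring
          _ ≤ g * u * v := Nat.mul_le_mul (Nat.mul_le_mul hg1 hu1) le_rfl
      have huk : u ≤ k := le_trans huuv e3
      have hvk : v ≤ k := le_trans hvuv e3
      simp only [mem_coe, hD, mem_filter, mem_product, mem_Icc]
      exact ⟨⟨⟨hg1, hgk⟩, ⟨hu1, huk⟩, hv1, hvk⟩, e3⟩
    · intro q hq r hr h
      simp only [mem_coe, hPf, mem_filter, mem_product, mem_Icc] at hq hr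
      obtain ⟨⟨⟨hx1, hx2⟩, hy1, hy2⟩, n, hn, hnsq⟩ := hq
      obtain ⟨⟨⟨hx1', hx2'⟩, hy1', hy2'⟩, n', hn', hnsq'⟩ := hr
      obtain ⟨e1, e2, -⟩ := param_sq hx1 hy1 hn.2 hnsq
      obtain ⟨e1', e2', -⟩ := param_sq hx1' hy1' hn'.2 hnsq'
      simp only [Prod.ext_iff] at h ⊢
      obtain ⟨h1, h2, h3⟩ := h
      constructor
      · calc q.1 = Nat.gcd q.1 q.2 * Nat.sqrt (q.1 / Nat.gcd q.1 q.2) ^ 2 := e1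
          _ = Nat.gcd r.1 r.2 * Nat.sqrt (r.1 / Nat.gcd r.1 r.2) ^ 2 := by rw [h2, h1]
          _ = r.1 := e1'.symm
      · calc q.2 = Nat.gcd q.1 q.2 * Nat.sqrt (q.2 / Nat.gcd q.1 q.2) ^ 2 := e2
          _ = Nat.gcd r.1 r.2 * Nat.sqrt (r.2 / Nat.gcd r.1 r.2) ^ 2 := by rw [h3, h1]
          _ = r.2 := e2'.symm
  -- Step 5 : harmonic bound
  have step5 : (D.card : ℝ) ≤ k * (1 + Real.log k) ^ 2 := by
    have hcard : D.card ≤ ∑ w ∈ Icc 1 k ×ˢ Icc 1 k, k / (w.1 * w.2) := by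
      rw [hD, Finset.card_filter, Finset.sum_product, Finset.sum_comm]
      apply Finset.sum_le_sum
      intro w hw
      simp only [mem_product, mem_Icc] at hw
      have hpos : 0 < w.1 * w.2 := Nat.mul_pos hw.1.1 hw.2.1
      rw [← Finset.card_filter]
      calc (Finset.filter (fun g => g * w.1 * w.2 ≤ k) (Icc 1 k)).card
          ≤ (Icc 1 (k / (w.1 * w.2))).card := by
            apply Finset.card_le_card
            intro g hg
            simp only [mem_filter, mem_Icc] at hg ⊢
            exact ⟨hg.1.1, (Nat.le_div_iff_mul_le hpos).mpr (by rw [← mul_assoc]; exact hg.2)⟩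
        _ = k / (w.1 * w.2) := by rw [Nat.card_Icc]; exact Nat.succ_sub_one _
    have hcast : (D.card : ℝ) ≤ ∑ w ∈ Icc 1 k ×ˢ Icc 1 k, (k : ℝ) / ((w.1 : ℝ) * w.2) := by
      calc (D.card : ℝ) ≤ ((∑ w ∈ Icc 1 k ×ˢ Icc 1 k, k / (w.1 * w.2) : ℕ) : ℝ) := by
            exact_mod_cast hcard
        _ = ∑ w ∈ Icc 1 k ×ˢ Icc 1 k, ((k / (w.1 * w.2) : ℕ) : ℝ) := Nat.cast_sum _ _
        _ ≤ ∑ w ∈ Icc 1 k ×ˢ Icc 1 k, (k : ℝ) / ((w.1 : ℝ) * w.2) := by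
            apply Finset.sum_le_sum
            intro w hw
            calc ((k / (w.1 * w.2) : ℕ) : ℝ) ≤ (k : ℝ) / ((w.1 * w.2 : ℕ) : ℝ) :=
                  Nat.cast_div_le
              _ = (k : ℝ) / ((w.1 : ℝ) * w.2) := by push_cast; ring
    have hsum : ∑ w ∈ Icc 1 k ×ˢ Icc 1 k, (k : ℝ) / ((w.1 : ℝ) * w.2)
        = (k : ℝ) * (∑ u ∈ Icc 1 k, ((u : ℕ) : ℝ)⁻¹) ^ 2 := by
      rw [sq, Finset.sum_mul_sum, Finset.mul_sum, Finset.sum_product]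
      apply Finset.sum_congr rfl
      intro u hu
      rw [Finset.mul_sum]
      apply Finset.sum_congr rfl
      intro v hv
      rw [div_eq_mul_inv, mul_inv]
    have hharm : ∑ u ∈ Icc 1 k, ((u : ℕ) : ℝ)⁻¹ ≤ 1 + Real.log k := by
      have h1 : ((harmonic k : ℚ) : ℝ) = ∑ u ∈ Icc 1 k, ((u : ℕ) : ℝ)⁻¹ := by
        rw [harmonic_eq_sum_Icc]
        push_cast
        rfl
      rw [← h1]
      exact harmonic_le_one_add_log k
    have hnn : (0:ℝ) ≤ ∑ u ∈ Icc 1 k, ((u : ℕ) : ℝ)⁻¹ := by positivity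
    calc (D.card : ℝ) ≤ (k : ℝ) * (∑ u ∈ Icc 1 k, ((u : ℕ) : ℝ)⁻¹) ^ 2 := by
          rw [← hsum]; exact hcast
      _ ≤ (k : ℝ) * (1 + Real.log k) ^ 2 := by
          apply mul_le_mul_of_nonneg_left _ hk0.le
          exact pow_le_pow_left₀ hnn hharm 2
  -- Step 6 : log vs rpow
  have hkR : (1:ℝ) ≤ (k:ℝ) := by exact_mod_cast hk
  have step6 : (1 + Real.log k) ^ 2 ≤ (1 + 2 / ε) ^ 2 * (k:ℝ) ^ (ε:ℝ) := by
    have hhalf : (1:ℝ) ≤ (k:ℝ) ^ (ε/2) := by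
      rw [show (1:ℝ) = (k:ℝ) ^ (0:ℝ) by rw [Real.rpow_zero]]
      exact Real.rpow_le_rpow_of_exponent_le hkR (by linarith)
    have h1 : Real.log ((k:ℝ) ^ (ε/2)) = (ε/2) * Real.log k := Real.log_rpow hk0 _
    have h2 : Real.log ((k:ℝ) ^ (ε/2)) ≤ (k:ℝ) ^ (ε/2) - 1 :=
      Real.log_le_sub_one_of_pos (by positivity)
    have hlog : Real.log k ≤ (2/ε) * (k:ℝ) ^ (ε/2) := by
      have h3 : (ε/2) * Real.log k ≤ (k:ℝ) ^ (ε/2) := by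
        rw [← h1]; linarith
      calc Real.log k = (2/ε) * ((ε/2) * Real.log k) := by field_simp
        _ ≤ (2/ε) * (k:ℝ) ^ (ε/2) := by
            apply mul_le_mul_of_nonneg_left h3 (by positivity)
    have h4 : 1 + Real.log k ≤ (1 + 2/ε) * (k:ℝ) ^ (ε/2) := by
      have he : (0:ℝ) ≤ 2/ε := by positivity
      nlinarith [hhalf, hlog]
    have h5 : (0:ℝ) ≤ 1 + Real.log k := by
      have := Real.log_nonneg hkR
      linarith
    calc (1 + Real.log k) ^ 2 ≤ ((1 + 2/ε) * (k:ℝ) ^ (ε/2)) ^ 2 := pow_le_pow_left₀ h5 h4 2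
      _ = (1 + 2/ε) ^ 2 * ((k:ℝ) ^ (ε/2)) ^ 2 := by ring
      _ = (1 + 2/ε) ^ 2 * (k:ℝ) ^ (ε:ℝ) := by
          rw [← Real.rpow_natCast ((k:ℝ) ^ (ε/2)) 2, ← Real.rpow_mul hk0.le]
          norm_num
  -- assembly
  have hIcard : (I.card : ℝ) ≤ 3 * k := by
    rw [hIcard']
    push_cast
    linarith
  have hT : (((I ×ˢ B) ×ˢ (Finset.univ : Finset Bool)).card : ℝ)
      = (I.card : ℝ) * B.card * 2 := by
    simp [Finset.card_product]
  have h1 : ((Finset.filter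
          (fun p : ℤ × ℤ × ℤ × ℤ => (p.1 - p.2.2.2) ^ 2 + 4 * p.2.1 * p.2.2.1 = 0)
          (I ×ˢ I ×ˢ I ×ˢ I)).card : ℝ) ≤ (I.card : ℝ) * B.card * 2 := by
    rw [← hT]
    exact_mod_cast step1
  set E : ℝ := (k:ℝ) ^ (ε:ℝ) with hE
  have hone : (1:ℝ) ≤ E := by
    rw [hE, show (1:ℝ) = (k:ℝ) ^ (0:ℝ) by rw [Real.rpow_zero]]
    exact Real.rpow_le_rpow_of_exponent_le hkR (by linarith)
  have hPfD : (Pf.card : ℝ) ≤ (k:ℝ) * ((1 + 2/ε) ^ 2 * E) := by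
    calc (Pf.card : ℝ) ≤ (D.card : ℝ) := by exact_mod_cast step4
      _ ≤ (k:ℝ) * (1 + Real.log k) ^ 2 := step5
      _ ≤ (k:ℝ) * ((1 + 2/ε) ^ 2 * E) := mul_le_mul_of_nonneg_left step6 hk0.le
  have hBbound : (B.card : ℝ) ≤ 6 * k + 2 * ((k:ℝ) * ((1 + 2/ε) ^ 2 * E)) := by linarith
  have hpow : (k : ℝ) ^ ((2:ℝ) + ε) = (k:ℝ) ^ 2 * E := by
    rw [hE, Real.rpow_add hk0]
    congr 1
    rw [show ((2:ℝ)) = ((2:ℕ) : ℝ) by norm_num, Real.rpow_natCast]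
  have hB0' : (0:ℝ) ≤ (B.card : ℝ) := by positivity
  calc ((Finset.filter
          (fun p : ℤ × ℤ × ℤ × ℤ => (p.1 - p.2.2.2) ^ 2 + 4 * p.2.1 * p.2.2.1 = 0)
          (I ×ˢ I ×ˢ I ×ˢ I)).card : ℝ)
      ≤ (I.card : ℝ) * B.card * 2 := h1
    _ ≤ (3 * k) * (6 * k + 2 * ((k:ℝ) * ((1 + 2/ε) ^ 2 * E))) * 2 := by
        apply mul_le_mul_of_nonneg_right _ (by norm_num)
        have := mul_le_mul hIcard hBbound hB0' (by positivity : (0:ℝ) ≤ 3 * k)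
        exact this
    _ = 36 * (k:ℝ) ^ 2 + 12 * (1 + 2/ε) ^ 2 * ((k:ℝ) ^ 2 * E) := by ring
    _ ≤ 36 * ((k:ℝ) ^ 2 * E) + 12 * (1 + 2/ε) ^ 2 * ((k:ℝ) ^ 2 * E) := by
        have hsq : (k:ℝ) ^ 2 ≤ (k:ℝ) ^ 2 * E := le_mul_of_one_le_right (by positivity) hone
        have hc : (0:ℝ) ≤ 12 * (1 + 2/ε) ^ 2 := by positivity
        linarith
    _ = (36 + 12 * (1 + 2 / ε) ^ 2) * ((k:ℝ) ^ 2 * E) := by ring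
    _ = (36 + 12 * (1 + 2 / ε) ^ 2) * (k : ℝ) ^ ((2:ℝ) + ε) := by rw [hpow]
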